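/- Deadlock freedom / termination for a linear pipeline: consider a linear pipeline of n nodes where each firing of a node strictly consumes at least one pending input (data or signal) from its input queues and enqueues at most a bounded number of outputs downstream, and where the last node's output space is unbounded. If the total initial input is finite and no new external input arrives, then under any scheduler that repeatedly fires some fireable node, the system reaches in finitely many steps a state in which no node has pending data or signals. -/

import Mathlib

/-- A firing of node `i` in a linear pipeline of `n` nodes with pending-input
counts `q`: the node consumes `d ≥ 1` pending inputs and enqueues `out ≤ B·d`
outputs at node `i+1` (nothing if `i` is the last node); the downstream queue
has finite capacity `C`, which the firing may not overflow. -/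
def FireAt (n B C : ℕ) (i : Fin n) (q q' : Fin n → ℕ) : Prop :=
  ∃ d out : ℕ, 1 ≤ d ∧ d ≤ q i ∧ out ≤ B * d ∧
    (∀ j : Fin n, q' j =
      if j = i then q i - d
      else if (j : ℕ) = (i : ℕ) + 1 then q j + out else q j) ∧
    (∀ j : Fin n, (j : ℕ) = (i : ℕ) + 1 → q j + out ≤ C)

/-- Some node fires. -/
def Fire (n B C : ℕ) (q q' : Fin n → ℕ) : Prop :=
  ∃ i : Fin n, FireAt n B C i q q'

/-- Weighted measure: pending inputs at node `i` count with weight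
`(B+1)^(n-1-i)`, so each firing strictly decreases the measure. -/
def pipeMeasure (n B : ℕ) (q : Fin n → ℕ) : ℕ :=
  ∑ j : Fin n, q j * (B + 1) ^ (n - 1 - (j : ℕ))

lemma fire_measure_lt (n B C : ℕ) (q q' : Fin n → ℕ) (h : Fire n B C q q') :
    pipeMeasure n B q' < pipeMeasure n B q := by
  obtain ⟨i, d, out, hd1, hdq, hout, hq', _⟩ := h
  set w : Fin n → ℕ := fun j => (B + 1) ^ (n - 1 - (j : ℕ)) with hw
  have hwpos : ∀ j, 0 < w j := fun j => pow_pos (Nat.succ_pos B) _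
  by_cases hi1 : (i : ℕ) + 1 < n
  · -- there is a downstream node
    set j1 : Fin n := ⟨(i : ℕ) + 1, hi1⟩ with hj1
    have hji : j1 ≠ i := by
      simp [Fin.ext_iff, hj1]
    have hq'j1 : q' j1 = q j1 + out := by
      rw [hq' j1, if_neg hji, if_pos (show (j1 : ℕ) = (i : ℕ) + 1 from rfl)]
    have hq'i : q' i = q i - d := by rw [hq' i]; simp
    have hkey : ∀ j, j ≠ i → j ≠ j1 → q' j = q j := by
      intro j h1 h2
      rw [hq' j]
      have : (j : ℕ) ≠ (i : ℕ) + 1 := by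
        intro hc; exact h2 (Fin.ext hc)
      simp [h1, this]
    have split : ∀ r : Fin n → ℕ, ∑ j : Fin n, r j * w j
        = (∑ j ∈ (Finset.univ.erase i).erase j1, r j * w j) + r j1 * w j1 + r i * w i := by
      intro r
      rw [Finset.sum_erase_add _ _ (Finset.mem_erase.mpr ⟨hji, Finset.mem_univ _⟩),
          Finset.sum_erase_add _ _ (Finset.mem_univ i)]
    have hsame : (∑ j ∈ (Finset.univ.erase i).erase j1, q' j * w j)
        = ∑ j ∈ (Finset.univ.erase i).erase j1, q j * w j := by
      apply Finset.sum_congr rfl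
      intro j hj
      simp only [Finset.mem_erase] at hj
      rw [hkey j hj.2.1 hj.1]
    have hwrel : w i = w j1 * (B + 1) := by
      have h1 : n - 1 - (i : ℕ) = (n - 1 - ((i : ℕ) + 1)) + 1 := by omega
      simp only [hw, hj1, h1, pow_succ]
    rw [pipeMeasure, pipeMeasure, split q, split q', hsame, hq'j1, hq'i]
    have hwj1 : 1 ≤ w j1 := hwpos j1
    have hsub : q i = (q i - d) + d := by omega
    have h2 : (q j1 + out) * w j1 + (q i - d) * w i < q j1 * w j1 + q i * w i := by
      rw [hwrel]
      nlinarith [hsub, Nat.mul_le_mul_right (w j1) hout, Nat.mul_le_mul_left d hwj1]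
    omega
  · -- i is the last node
    have hq'i : q' i = q i - d := by rw [hq' i]; simp
    have hkey : ∀ j, j ≠ i → q' j = q j := by
      intro j h1
      rw [hq' j]
      have : (j : ℕ) ≠ (i : ℕ) + 1 := by
        have := j.isLt; omega
      simp [h1, this]
    have split : ∀ r : Fin n → ℕ, ∑ j : Fin n, r j * w j
        = (∑ j ∈ Finset.univ.erase i, r j * w j) + r i * w i := by
      intro r
      rw [Finset.sum_erase_add _ _ (Finset.mem_univ i)]
    have hsame : (∑ j ∈ Finset.univ.erase i, q' j * w j)
        = ∑ j ∈ Finset.univ.erase i, q j * w j := by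
      apply Finset.sum_congr rfl
      intro j hj
      exact congrArg (· * w j) (hkey j (Finset.mem_erase.mp hj).1)
    rw [pipeMeasure, pipeMeasure, split q, split q', hsame, hq'i]
    have : (q i - d) * w i < q i * w i :=
      (Nat.mul_lt_mul_right (hwpos i)).mpr (by omega)
    omega

/-- deadlock freedom / termination: in a linear pipeline whose
downstream queues have capacity `C ≥ B`, (1) there is no infinite sequence of
firings (so every maximal execution from a finite initial input is finite),
and (2) any state in which no node can fire has no pending data or signals at
any node, i.e. maximal executions end with `q = 0`. -/
theorem pipeline_terminates (n B C : ℕ) (hn : 0 < n) (hC : B ≤ C) :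
    (¬ ∃ f : ℕ → (Fin n → ℕ), ∀ k, Fire n B C (f k) (f (k + 1))) ∧
    (∀ q : Fin n → ℕ, (¬ ∃ q', Fire n B C q q') → ∀ i, q i = 0) := by
  constructor
  · rintro ⟨f, hf⟩
    have hd : ∀ k, pipeMeasure n B (f (k + 1)) < pipeMeasure n B (f k) :=
      fun k => fire_measure_lt n B C _ _ (hf k)
    have hbound : ∀ k, pipeMeasure n B (f k) + k ≤ pipeMeasure n B (f 0) := by
      intro k
      induction k with
      | zero => simp
      | succ k ih => have := hd k; omega
    have := hbound (pipeMeasure n B (f 0) + 1)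
    omega
  · intro q hq i
    by_contra hqi
    apply hq
    set s : Finset (Fin n) := Finset.univ.filter (fun j => q j ≠ 0) with hs
    have hne : s.Nonempty := ⟨i, by simp [hs, hqi]⟩
    set m : Fin n := s.max' hne with hm
    have hmne : q m ≠ 0 := by
      have := s.max'_mem hne
      simp [hs] at this; exact this
    have hmax : ∀ j, q j ≠ 0 → j ≤ m := by
      intro j hj
      exact s.le_max' j (by simp [hs, hj])
    refine ⟨fun j => if j = m then q m - 1 else if (j : ℕ) = (m : ℕ) + 1 then q j + 0 else q j,
      m, 1, 0, le_refl 1, by omega, by omega, fun j => rfl, ?_⟩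
    intro j hj
    have hjm : q j = 0 := by
      by_contra hc
      have := hmax j hc
      have : (j : ℕ) ≤ (m : ℕ) := this
      omega
    omega
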